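/- Let a, b, c, d be nonnegative integers with b, d positive, gcd(a,b) = 1, gcd(c,d) = 1, and bc − ad = 2^m · 3^n for some nonnegative integers m, n. Then (i) every rational number x with a/b ≤ x ≤ c/d appears in the tree T(a/b, c/d), and (ii) there exists L such that for all rows with index at least L, every pair of consecutive entries p, q of S(n)(a/b, c/d) has cross-determinant 1, i.e. den(p)·num(q) − num(p)·den(q) = 1. -/

import Mathlib

/-- The mediant of two rationals `p` and `q`: `(num p + num q) / (den p + den q)`. -/
def mediant (p q : ℚ) : ℚ := ((p.num + q.num : ℤ) : ℚ) / ((p.den + q.den : ℕ) : ℚ)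

def xdet (p q : ℚ) : ℤ := (p.den : ℤ) * q.num - p.num * q.den

lemma mediant_key (p q : ℚ) : ∃ t : ℤ, 0 < t ∧
    p.num + q.num = (mediant p q).num * t ∧
    (p.den : ℤ) + (q.den : ℤ) = ((mediant p q).den : ℤ) * t := by
  have hDpos : (0:ℤ) < (p.den : ℤ) + (q.den : ℤ) := by positivity
  have hrd : mediant p q = Rat.divInt (p.num + q.num) ((p.den : ℤ) + (q.den : ℤ)) := by
    rw [Rat.divInt_eq_div, mediant]; push_cast; ring
  set r := mediant p q with hr
  have hcross : r.num * ((p.den : ℤ) + (q.den : ℤ)) = (p.num + q.num) * (r.den : ℤ) := by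
    have h1 : Rat.divInt r.num r.den = Rat.divInt (p.num + q.num) ((p.den : ℤ) + (q.den : ℤ)) := by
      rw [Rat.num_divInt_den, hrd]
    exact (Rat.divInt_eq_divInt_iff (by exact_mod_cast r.den_nz) hDpos.ne').mp h1
  have hcop : IsCoprime ((r.den : ℤ)) r.num := by
    rw [Int.isCoprime_iff_gcd_eq_one]
    simpa [Int.gcd] using Nat.Coprime.symm r.reduced
  have hdvd : (r.den : ℤ) ∣ (p.den : ℤ) + (q.den : ℤ) := by
    refine hcop.dvd_of_dvd_mul_left ⟨p.num + q.num, ?_⟩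
    linear_combination hcross
  obtain ⟨t, ht⟩ := hdvd
  have hden : (0:ℤ) < r.den := by exact_mod_cast r.pos
  have htpos : 0 < t := by nlinarith
  refine ⟨t, htpos, ?_, ht⟩
  rw [ht] at hcross
  have h3 : (r.num * t) * (r.den : ℤ) = (p.num + q.num) * (r.den : ℤ) := by
    linear_combination hcross
  exact (mul_right_cancel₀ hden.ne' h3).symm

lemma mediant_det (p q : ℚ) : ∃ t : ℤ, 0 < t ∧
    xdet p (mediant p q) * t = xdet p q ∧
    xdet (mediant p q) q * t = xdet p q ∧
    p.num + q.num = (mediant p q).num * t ∧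
    (p.den : ℤ) + (q.den : ℤ) = ((mediant p q).den : ℤ) * t := by
  obtain ⟨t, ht, hN, hD⟩ := mediant_key p q
  refine ⟨t, ht, ?_, ?_, hN, hD⟩
  · unfold xdet
    linear_combination (-(p.den : ℤ)) * hN + p.num * hD
  · unfold xdet
    linear_combination (-(q.num : ℤ)) * hD + (q.den : ℤ) * hN

lemma z2aux : ∀ a b c d : ZMod 2, ¬(a = 0 ∧ b = 0) → ¬(c = 0 ∧ d = 0) →
    b * c - a * d = 0 → a + c = 0 ∧ b + d = 0 := by decide

lemma z3aux : ∀ a b c d : ZMod 3, ¬(a = 0 ∧ b = 0) → ¬(c = 0 ∧ d = 0) →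
    b * c - a * d = 0 → ¬(a + c = 0 ∧ b + d = 0) →
    (a + a + c = 0 ∧ b + b + d = 0 ∧ a + c + c = 0 ∧ b + d + d = 0) := by decide

lemma not_both_dvd (e : ℕ) (he : 1 < e) (p : ℚ) :
    ¬(((e : ℤ)) ∣ p.num ∧ ((e : ℤ)) ∣ (p.den : ℤ)) := by
  rintro ⟨h1, h2⟩
  have d1 : e ∣ p.num.natAbs := Int.natCast_dvd_natCast.mp (Int.dvd_natAbs.mpr h1)
  have d2 : e ∣ p.den := Int.natCast_dvd_natCast.mp h2
  have := Nat.dvd_gcd d1 d2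
  rw [p.reduced] at this
  have := Nat.le_of_dvd one_pos this
  omega

lemma not_both_zmod (e : ℕ) (he : 1 < e) (p : ℚ) :
    ¬((p.num : ZMod e) = 0 ∧ ((p.den : ℤ) : ZMod e) = 0) := by
  rintro ⟨h1, h2⟩
  rw [ZMod.intCast_zmod_eq_zero_iff_dvd] at h1 h2
  exact not_both_dvd e he p ⟨h1, h2⟩

lemma xdet_zmod (e : ℕ) (p q : ℚ) (h : ((e : ℕ) : ℤ) ∣ xdet p q) :
    ((p.den : ℤ) : ZMod e) * (q.num : ZMod e) - (p.num : ZMod e) * ((q.den : ℤ) : ZMod e) = 0 := by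
  have : ((xdet p q : ℤ) : ZMod e) = 0 := (ZMod.intCast_zmod_eq_zero_iff_dvd _ _).mpr h
  unfold xdet at this
  push_cast at this ⊢
  linear_combination this

lemma sum_dvd_two (p q : ℚ) (h : (2:ℤ) ∣ xdet p q) :
    (2:ℤ) ∣ p.num + q.num ∧ (2:ℤ) ∣ (p.den : ℤ) + (q.den : ℤ) := by
  have h0 := xdet_zmod 2 p q (by exact_mod_cast h)
  have h2 := z2aux (p.num : ZMod 2) ((p.den : ℤ) : ZMod 2) (q.num : ZMod 2) ((q.den : ℤ) : ZMod 2)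
    (not_both_zmod 2 one_lt_two p) (not_both_zmod 2 one_lt_two q) h0
  constructor
  · have := h2.1
    rw [show ((p.num : ZMod 2) + (q.num : ZMod 2)) = ((p.num + q.num : ℤ) : ZMod 2) by push_cast; ring] at this
    exact_mod_cast (ZMod.intCast_zmod_eq_zero_iff_dvd _ _).mp this
  · have := h2.2
    rw [show (((p.den : ℤ) : ZMod 2) + ((q.den : ℤ) : ZMod 2)) = (((p.den : ℤ) + (q.den : ℤ) : ℤ) : ZMod 2) by push_cast; ring] at this
    exact_mod_cast (ZMod.intCast_zmod_eq_zero_iff_dvd _ _).mp this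

lemma sum_dvd_three (p q : ℚ) (h : (3:ℤ) ∣ xdet p q)
    (hn : ¬((3:ℤ) ∣ p.num + q.num ∧ (3:ℤ) ∣ (p.den : ℤ) + (q.den : ℤ))) :
    ((3:ℤ) ∣ p.num + p.num + q.num) ∧ ((3:ℤ) ∣ (p.den : ℤ) + (p.den : ℤ) + (q.den : ℤ)) ∧
    ((3:ℤ) ∣ p.num + q.num + q.num) ∧ ((3:ℤ) ∣ (p.den : ℤ) + (q.den : ℤ) + (q.den : ℤ)) := by
  have h0 := xdet_zmod 3 p q (by exact_mod_cast h)
  have hn' : ¬((p.num : ZMod 3) + (q.num : ZMod 3) = 0 ∧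
      ((p.den : ℤ) : ZMod 3) + ((q.den : ℤ) : ZMod 3) = 0) := by
    rintro ⟨e1, e2⟩
    refine hn ⟨?_, ?_⟩
    · rw [show ((p.num : ZMod 3) + (q.num : ZMod 3)) = ((p.num + q.num : ℤ) : ZMod 3) by push_cast; ring] at e1
      exact_mod_cast (ZMod.intCast_zmod_eq_zero_iff_dvd _ _).mp e1
    · rw [show (((p.den : ℤ) : ZMod 3) + ((q.den : ℤ) : ZMod 3)) = (((p.den : ℤ) + (q.den : ℤ) : ℤ) : ZMod 3) by push_cast; ring] at e2
      exact_mod_cast (ZMod.intCast_zmod_eq_zero_iff_dvd _ _).mp e2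
  have h3 := z3aux (p.num : ZMod 3) ((p.den : ℤ) : ZMod 3) (q.num : ZMod 3) ((q.den : ℤ) : ZMod 3)
    (not_both_zmod 3 (by norm_num) p) (not_both_zmod 3 (by norm_num) q) h0 hn'
  refine ⟨?_, ?_, ?_, ?_⟩
  · have := h3.1
    rw [show ((p.num : ZMod 3) + (p.num : ZMod 3) + (q.num : ZMod 3)) = ((p.num + p.num + q.num : ℤ) : ZMod 3) by push_cast; ring] at this
    exact_mod_cast (ZMod.intCast_zmod_eq_zero_iff_dvd _ _).mp this
  · have := h3.2.1
    rw [show (((p.den : ℤ) : ZMod 3) + ((p.den : ℤ) : ZMod 3) + ((q.den : ℤ) : ZMod 3)) = (((p.den : ℤ) + (p.den : ℤ) + (q.den : ℤ) : ℤ) : ZMod 3) by push_cast; ring] at this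
    exact_mod_cast (ZMod.intCast_zmod_eq_zero_iff_dvd _ _).mp this
  · have := h3.2.2.1
    rw [show ((p.num : ZMod 3) + (q.num : ZMod 3) + (q.num : ZMod 3)) = ((p.num + q.num + q.num : ℤ) : ZMod 3) by push_cast; ring] at this
    exact_mod_cast (ZMod.intCast_zmod_eq_zero_iff_dvd _ _).mp this
  · have := h3.2.2.2
    rw [show (((p.den : ℤ) : ZMod 3) + ((q.den : ℤ) : ZMod 3) + ((q.den : ℤ) : ZMod 3)) = (((p.den : ℤ) + (q.den : ℤ) + (q.den : ℤ) : ℤ) : ZMod 3) by push_cast; ring] at this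
    exact_mod_cast (ZMod.intCast_zmod_eq_zero_iff_dvd _ _).mp this

lemma smooth_div {t : ℤ} (ht : 0 < t) {α β : ℕ} (h : t ∣ 2 ^ α * 3 ^ β) :
    ∃ a, a ≤ α ∧ ∃ b, b ≤ β ∧ t = 2 ^ a * 3 ^ b := by
  lift t to ℕ using ht.le with u
  have hu : u ∣ 2 ^ α * 3 ^ β := by exact_mod_cast h
  obtain ⟨y, z, hy, hz, hyz⟩ := Nat.dvd_mul.mp hu
  obtain ⟨a, ha, rfl⟩ := (Nat.dvd_prime_pow Nat.prime_two).mp hy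
  obtain ⟨b, hbb, rfl⟩ := (Nat.dvd_prime_pow Nat.prime_three).mp hz
  exact ⟨a, ha, b, hbb, by exact_mod_cast hyz.symm⟩
section
open Classical in
noncomputable def cflag (p q : ℚ) : ℕ :=
  if ((3:ℤ) ∣ xdet p q ∧ ¬((3:ℤ) ∣ p.num + q.num ∧ (3:ℤ) ∣ (p.den : ℤ) + (q.den : ℤ))) then 1 else 0

lemma cflag_le_one (p q : ℚ) : cflag p q ≤ 1 := by
  unfold cflag; split <;> omega

def rel (B : ℕ) (p q : ℚ) : Prop :=
  ∃ α β : ℕ, xdet p q = 2 ^ α * 3 ^ β ∧ 2 * (α + β) + cflag p q ≤ B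

lemma rel_zero_det {p q : ℚ} (h : rel 0 p q) : xdet p q = 1 := by
  obtain ⟨α, β, hD, hM⟩ := h
  have : α = 0 ∧ β = 0 := by omega
  rw [hD, this.1, this.2]; norm_num

lemma rel_step {B : ℕ} {p q : ℚ} (h : rel B p q) :
    rel (B - 1) p (mediant p q) ∧ rel (B - 1) (mediant p q) q := by
  obtain ⟨α, β, hD, hM⟩ := h
  obtain ⟨t, ht, h1, h2, hN, hDen⟩ := mediant_det p q
  set r := mediant p q with hr
  have htd : t ∣ 2 ^ α * 3 ^ β := ⟨xdet p r, by rw [← hD, ← h1]; ring⟩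
  obtain ⟨a, ha, b, hbβ, hts⟩ := smooth_div ht htd
  have hpow2 : (0:ℤ) < 2 ^ a * 3 ^ b := by positivity
  have hrearr : (2:ℤ) ^ (α - a) * 3 ^ (β - b) * (2 ^ a * 3 ^ b) = 2 ^ α * 3 ^ β := by
    rw [mul_mul_mul_comm, pow_sub_mul_pow _ ha, pow_sub_mul_pow _ hbβ]
  have key : ∀ X : ℤ, X * t = 2 ^ α * 3 ^ β → X = 2 ^ (α - a) * 3 ^ (β - b) := by
    intro X hX
    apply mul_right_cancel₀ hpow2.ne'
    rw [hrearr, ← hts, hX]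
  have hdet1 : xdet p r = 2 ^ (α - a) * 3 ^ (β - b) := key _ (by rw [h1, hD])
  have hdet2 : xdet r q = 2 ^ (α - a) * 3 ^ (β - b) := key _ (by rw [h2, hD])
  have hdvdt : ∀ e : ℕ, 1 < e → Prime (e : ℤ) → ((e:ℤ) ∣ p.num + q.num) →
      ((e:ℤ) ∣ (p.den : ℤ) + (q.den : ℤ)) → (e:ℤ) ∣ t := by
    intro e he hpe e1 e2
    rw [hN] at e1; rw [hDen] at e2
    rcases hpe.dvd_mul.mp e1 with hnum | hh
    · rcases hpe.dvd_mul.mp e2 with hden | hh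
      · exact absurd ⟨hnum, hden⟩ (not_both_dvd e he r)
      · exact hh
    · exact hh
  by_cases hα : 1 ≤ α
  · -- 2 divides the determinant; the 2-part strictly drops
    have h2d : (2:ℤ) ∣ xdet p q := by
      rw [hD]; exact dvd_mul_of_dvd_left (dvd_pow_self 2 (by omega)) _
    obtain ⟨e1, e2⟩ := sum_dvd_two p q h2d
    have h2t : (2:ℤ) ∣ t := hdvdt 2 one_lt_two Int.prime_two e1 e2
    have ha1 : 1 ≤ a := by
      by_contra hc
      have ha0 : a = 0 := by omega
      rw [hts, ha0, pow_zero, one_mul] at h2t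
      have := Int.prime_two.dvd_of_dvd_pow h2t
      norm_num at this
    exact ⟨⟨α - a, β - b, hdet1, by have := cflag_le_one p r; omega⟩,
      ⟨α - a, β - b, hdet2, by have := cflag_le_one r q; omega⟩⟩
  · have hα0 : α = 0 := by omega
    by_cases hβ : 1 ≤ β
    · by_cases hsum : ((3:ℤ) ∣ p.num + q.num ∧ (3:ℤ) ∣ (p.den : ℤ) + (q.den : ℤ))
      · have h3t : (3:ℤ) ∣ t := hdvdt 3 (by norm_num) Int.prime_three hsum.1 hsum.2
        have hb1 : 1 ≤ b := by
          by_contra hc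
          have hb0 : b = 0 := by omega
          rw [hts, hb0, pow_zero, mul_one] at h3t
          have := Int.prime_three.dvd_of_dvd_pow h3t
          norm_num at this
        exact ⟨⟨α - a, β - b, hdet1, by have := cflag_le_one p r; omega⟩,
          ⟨α - a, β - b, hdet2, by have := cflag_le_one r q; omega⟩⟩
      · -- the "bad" case: determinant unchanged but the flag drops to 0
        have h3d : (3:ℤ) ∣ xdet p q := by
          rw [hD]; exact dvd_mul_of_dvd_right (dvd_pow_self 3 (by omega)) _
        have hc1 : cflag p q = 1 := by unfold cflag; rw [if_pos ⟨h3d, hsum⟩]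
        have htN : t ∣ p.num + q.num := ⟨r.num, by rw [hN]; ring⟩
        have htD : t ∣ (p.den : ℤ) + (q.den : ℤ) := ⟨r.den, by rw [hDen]; ring⟩
        have hb0 : b = 0 := by
          by_contra hc
          have h3t : (3:ℤ) ∣ t := by
            rw [hts]; exact dvd_mul_of_dvd_right (dvd_pow_self 3 (by omega)) _
          exact hsum ⟨h3t.trans htN, h3t.trans htD⟩
        have ha0 : a = 0 := by omega
        have ht1 : t = 1 := by rw [hts, ha0, hb0]; norm_num
        rw [ht1, mul_one] at hN hDen
        obtain ⟨d1, d2, d3, d4⟩ := sum_dvd_three p q h3d hsum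
        have hc0l : cflag p r = 0 := by
          unfold cflag; rw [if_neg]
          rintro ⟨_, hno⟩
          refine hno ⟨?_, ?_⟩
          · have : p.num + r.num = p.num + p.num + q.num := by rw [← hN]; ring
            rw [this]; exact d1
          · have : (p.den : ℤ) + (r.den : ℤ) = (p.den : ℤ) + (p.den : ℤ) + (q.den : ℤ) := by
              rw [← hDen]; ring
            rw [this]; exact d2
        have hc0r : cflag r q = 0 := by
          unfold cflag; rw [if_neg]
          rintro ⟨_, hno⟩
          refine hno ⟨?_, ?_⟩
          · have : r.num + q.num = p.num + q.num + q.num := by rw [← hN]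
            rw [this]; exact d3
          · have : (r.den : ℤ) + (q.den : ℤ) = (p.den : ℤ) + (q.den : ℤ) + (q.den : ℤ) := by
              rw [← hDen]
            rw [this]; exact d4
        exact ⟨⟨α - a, β - b, hdet1, by rw [hc0l]; omega⟩,
          ⟨α - a, β - b, hdet2, by rw [hc0r]; omega⟩⟩
    · -- determinant 1
      have hβ0 : β = 0 := by omega
      have hab0 : a = 0 ∧ b = 0 := by omega
      have hone : xdet p r = 1 := by
        rw [hdet1, hα0, hβ0, hab0.1, hab0.2]; norm_num
      have hone2 : xdet r q = 1 := by
        rw [hdet2, hα0, hβ0, hab0.1, hab0.2]; norm_num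
      have hc0l : cflag p r = 0 := by
        unfold cflag; rw [if_neg]; rintro ⟨h3, _⟩; rw [hone] at h3; norm_num at h3
      have hc0r : cflag r q = 0 := by
        unfold cflag; rw [if_neg]; rintro ⟨h3, _⟩; rw [hone2] at h3; norm_num at h3
      exact ⟨⟨α - a, β - b, hdet1, by rw [hc0l]; omega⟩,
        ⟨α - a, β - b, hdet2, by rw [hc0r]; omega⟩⟩
end
/-- Insert between every pair of consecutive entries of a list their mediant. -/
def insertMediants : List ℚ → List ℚ
  | [] => []
  | [p] => [p]
  | p :: q :: rest => p :: mediant p q :: insertMediants (q :: rest)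

/-- The sequences of the tree `T(r, s)`: `S r s 0 = [r, s]`, and each successive
sequence is obtained by inserting mediants between consecutive entries. -/
def S (r s : ℚ) : ℕ → List ℚ
  | 0 => [r, s]
  | n + 1 => insertMediants (S r s n)

lemma insertMediants_cons (q : ℚ) (rest : List ℚ) :
    ∃ l', insertMediants (q :: rest) = q :: l' := by
  cases rest <;> exact ⟨_, rfl⟩

lemma chain'_insertMediants {B : ℕ} : ∀ {l : List ℚ},
    l.Chain' (rel B) → (insertMediants l).Chain' (rel (B - 1)) := by
  intro l
  induction l with
  | nil => intro _; simp [insertMediants, List.Chain']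
  | cons p tail ih =>
    cases tail with
    | nil => intro _; simp [insertMediants, List.Chain']
    | cons q rest =>
      intro h
      rw [List.Chain', List.isChain_cons_cons] at h
      obtain ⟨l', hl'⟩ := insertMediants_cons q rest
      show List.Chain' _ (p :: mediant p q :: insertMediants (q :: rest))
      have hch := ih h.2
      rw [hl'] at hch ⊢
      rw [List.Chain', List.isChain_cons_cons, List.isChain_cons_cons]
      exact ⟨(rel_step h.1).1, (rel_step h.1).2, hch⟩

lemma chain'_S {r s : ℚ} {B : ℕ} (h0 : rel B r s) :
    ∀ n, (S r s n).Chain' (rel (B - n)) := by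
  intro n
  induction n with
  | zero => simpa [S, List.Chain'] using h0
  | succ n ih =>
    have := chain'_insertMediants ih
    rw [Nat.sub_sub] at this
    exact this

lemma mem_insertMediants {x : ℚ} : ∀ {l : List ℚ}, x ∈ l → x ∈ insertMediants l := by
  intro l
  induction l with
  | nil => intro h; simp at h
  | cons p tail ih =>
    cases tail with
    | nil => intro h; simpa [insertMediants] using h
    | cons q rest =>
      intro h
      show x ∈ p :: mediant p q :: insertMediants (q :: rest)
      rcases List.mem_cons.mp h with rfl | h
      · exact List.mem_cons_self
      · exact List.mem_cons_of_mem _ (List.mem_cons_of_mem _ (ih h))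

lemma insertMediants_head? : ∀ (l : List ℚ), (insertMediants l).head? = l.head? := by
  intro l
  match l with
  | [] => rfl
  | [p] => rfl
  | p :: q :: rest => rfl

lemma insertMediants_getLast? : ∀ (l : List ℚ), (insertMediants l).getLast? = l.getLast? := by
  intro l
  induction l with
  | nil => rfl
  | cons p tail ih =>
    cases tail with
    | nil => rfl
    | cons q rest =>
      obtain ⟨l', hl'⟩ := insertMediants_cons q rest
      show (p :: mediant p q :: insertMediants (q :: rest)).getLast? = _
      rw [hl', List.getLast?_cons_cons, List.getLast?_cons_cons, ← hl', ih,
        List.getLast?_cons_cons]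

lemma infix_insertMediants {p q : ℚ} : ∀ {l : List ℚ}, [p, q] <:+: l →
    [p, mediant p q, q] <:+: insertMediants l := by
  intro l
  induction l with
  | nil => intro h; have := h.length_le; simp at this
  | cons x tail ih =>
    cases tail with
    | nil => intro h; have := h.length_le; simp at this
    | cons y rest =>
      intro h
      rcases h with ⟨s, t, hst⟩
      cases s with
      | nil =>
        simp only [List.nil_append, List.cons_append] at hst
        rw [← hst]
        obtain ⟨l', hl'⟩ := insertMediants_cons q t
        refine ⟨[], l', ?_⟩
        show [p, mediant p q, q] ++ l' = insertMediants (p :: q :: t)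
        show [p, mediant p q, q] ++ l' = p :: mediant p q :: insertMediants (q :: t)
        rw [hl']; rfl
      | cons z s' =>
        have h' : [p, q] <:+: y :: rest := by
          refine ⟨s', t, ?_⟩
          simp only [List.cons_append] at hst
          injection hst with _ h2
        have h2 := ih h'
        show [p, mediant p q, q] <:+: x :: mediant x y :: insertMediants (y :: rest)
        exact List.infix_cons (List.infix_cons h2)
lemma S_head? (r s : ℚ) : ∀ n, (S r s n).head? = some r := by
  intro n
  induction n with
  | zero => rfl
  | succ n ih => show (insertMediants _).head? = _; rw [insertMediants_head?, ih]

lemma S_getLast? (r s : ℚ) : ∀ n, (S r s n).getLast? = some s := by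
  intro n
  induction n with
  | zero => rfl
  | succ n ih => show (insertMediants _).getLast? = _; rw [insertMediants_getLast?, ih]

lemma length_insertMediants : ∀ l : List ℚ, l.length ≤ (insertMediants l).length := by
  intro l
  induction l with
  | nil => simp [insertMediants]
  | cons p tail ih =>
    cases tail with
    | nil => simp [insertMediants]
    | cons q rest =>
      show _ ≤ (p :: mediant p q :: insertMediants (q :: rest)).length
      simp only [List.length_cons] at ih ⊢
      omega

lemma length_S (r s : ℚ) : ∀ n, 2 ≤ (S r s n).length := by
  intro n
  induction n with
  | zero => simp [S]
  | succ n ih => exact ih.trans (length_insertMediants _)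

lemma locate (x : ℚ) : ∀ (l : List ℚ) (p q z : ℚ), (q :: l).getLast? = some z →
    p ≤ x → x ≤ z → ∃ u v, [u, v] <:+: (p :: q :: l) ∧ u ≤ x ∧ x ≤ v := by
  intro l
  induction l with
  | nil =>
    intro p q z hz hp hx
    have : q = z := by simpa using hz
    subst this
    exact ⟨p, q, List.infix_refl _, hp, hx⟩
  | cons y rest ih =>
    intro p q z hz hp hx
    by_cases hc : x ≤ q
    · exact ⟨p, q, ⟨[], y :: rest, rfl⟩, hp, hc⟩
    · have hq : q ≤ x := le_of_not_ge hc
      rw [List.getLast?_cons_cons] at hz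
      obtain ⟨u, v, hinf, hu, hv⟩ := ih q y z hz hq hx
      exact ⟨u, v, List.infix_cons hinf, hu, hv⟩

lemma descend (r s : ℚ) (L : ℕ)
    (hrel : ∀ n p q, L ≤ n → [p, q] <:+: S r s n → xdet p q = 1) :
    ∀ (fuel n : ℕ) (p q x : ℚ), L ≤ n → [p, q] <:+: S r s n → p ≤ x → x ≤ q →
      (q.num * x.den - q.den * x.num + (x.num * p.den - x.den * p.num)).toNat ≤ fuel →
      ∃ n', x ∈ S r s n' := by
  intro fuel
  induction fuel with
  | zero =>
    intro n p q x hLn hinf hpx hxq hfuel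
    rcases hpx.eq_or_lt with rfl | hlt
    · exact ⟨n, hinf.subset (by simp)⟩
    rcases hxq.eq_or_lt with rfl | hlt2
    · exact ⟨n, hinf.subset (by simp)⟩
    have hA : 0 < q.num * x.den - q.den * x.num := by
      have h := (Rat.lt_iff _ _).mp hlt2
      have := mul_comm (q.den : ℤ) x.num
      omega
    have hB : 0 < x.num * p.den - x.den * p.num := by
      have h := (Rat.lt_iff _ _).mp hlt
      have := mul_comm (x.den : ℤ) p.num
      omega
    omega
  | succ fuel ih =>
    intro n p q x hLn hinf hpx hxq hfuel
    rcases hpx.eq_or_lt with rfl | hlt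
    · exact ⟨n, hinf.subset (by simp)⟩
    rcases hxq.eq_or_lt with rfl | hlt2
    · exact ⟨n, hinf.subset (by simp)⟩
    have hA : 0 < q.num * x.den - q.den * x.num := by
      have h := (Rat.lt_iff _ _).mp hlt2
      have := mul_comm (q.den : ℤ) x.num
      omega
    have hB : 0 < x.num * p.den - x.den * p.num := by
      have h := (Rat.lt_iff _ _).mp hlt
      have := mul_comm (x.den : ℤ) p.num
      omega
    have hdet1 : xdet p q = 1 := hrel n p q hLn hinf
    obtain ⟨t, ht, h1, h2, hN, hDen⟩ := mediant_det p q
    set w := mediant p q with hw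
    have ht1 : t = 1 := by
      have hdvd : t ∣ 1 := ⟨xdet p w, by rw [← hdet1, ← h1]; ring⟩
      have := Int.le_of_dvd one_pos hdvd
      omega
    rw [ht1, mul_one] at hN hDen
    have hinf3 : [p, w, q] <:+: S r s (n + 1) := infix_insertMediants hinf
    have hinfl : [p, w] <:+: S r s (n + 1) :=
      List.IsInfix.trans ⟨[], [q], rfl⟩ hinf3
    have hinfr : [w, q] <:+: S r s (n + 1) :=
      List.IsInfix.trans ⟨[p], [], by simp⟩ hinf3
    rcases le_total x w with hxw | hwx
    · apply ih (n + 1) p w x (hLn.trans (Nat.le_succ n)) hinfl hpx hxw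
      have heq : w.num * x.den - w.den * x.num =
          (q.num * x.den - q.den * x.num) - (x.num * p.den - x.den * p.num) := by
        rw [← hN, ← hDen]; ring
      rw [heq]
      omega
    · apply ih (n + 1) w q x (hLn.trans (Nat.le_succ n)) hinfr hwx hxq
      have heq : x.num * w.den - x.den * w.num =
          (x.num * p.den - x.den * p.num) - (q.num * x.den - q.den * x.num) := by
        rw [← hN, ← hDen]; ring
      rw [heq]
      omega
lemma num_den_div (a b : ℕ) (hb : 0 < b) (h : Nat.gcd a b = 1) :
    ((a : ℚ) / b).num = a ∧ ((a : ℚ) / b).den = b := by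
  have he : ((a : ℚ) / b) = (⟨(a : ℤ), b, by omega, by simpa using h⟩ : ℚ) := by
    rw [Rat.mk_eq_divInt, Rat.divInt_eq_div]
    push_cast
    ring
  rw [he]
  exact ⟨rfl, rfl⟩

/-- If `a/b` and `c/d` are nonnegative fractions in lowest terms whose cross-determinant
`bc - ad` has the form `2 ^ m * 3 ^ k`, then (i) every rational `x` with `a/b ≤ x ≤ c/d`
appears in the tree `T(a/b, c/d)`, and (ii) from some row `L` on, every pair of
consecutive entries has cross-determinant `1`. -/
theorem appears_of_crossDeterminant_two_three_smooth (a b c d : ℕ) (hb : 0 < b) (hd : 0 < d)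
    (hab : Nat.gcd a b = 1) (hcd : Nat.gcd c d = 1)
    (m k : ℕ) (hdet : (b : ℤ) * c - a * d = 2 ^ m * 3 ^ k) :
    (∀ x : ℚ, (a : ℚ) / b ≤ x → x ≤ (c : ℚ) / d →
      ∃ n, x ∈ S ((a : ℚ) / b) ((c : ℚ) / d) n) ∧
    (∃ L, ∀ n, L ≤ n → ∀ j, (hj : j + 1 < (S ((a : ℚ) / b) ((c : ℚ) / d) n).length) →
      ((S ((a : ℚ) / b) ((c : ℚ) / d) n)[j].den : ℤ) *
          (S ((a : ℚ) / b) ((c : ℚ) / d) n)[j + 1].num -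
        (S ((a : ℚ) / b) ((c : ℚ) / d) n)[j].num *
          ((S ((a : ℚ) / b) ((c : ℚ) / d) n)[j + 1].den : ℤ) = 1) := by
  set r : ℚ := (a : ℚ) / b with hrdef
  set s : ℚ := (c : ℚ) / d with hsdef
  obtain ⟨hrn, hrd⟩ := num_den_div a b hb hab
  obtain ⟨hsn, hsd⟩ := num_den_div c d hd hcd
  have hdet0 : xdet r s = 2 ^ m * 3 ^ k := by
    unfold xdet
    rw [hrn, hrd, hsn, hsd]
    exact_mod_cast hdet
  set L₀ : ℕ := 2 * (m + k) + 1 with hL₀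
  have h0 : rel L₀ r s := ⟨m, k, hdet0, by have := cflag_le_one r s; omega⟩
  have hchain := chain'_S h0
  have hdet1all : ∀ n p q, L₀ ≤ n → [p, q] <:+: S r s n → xdet p q = 1 := by
    intro n p q hn hinf
    have hc := (hchain n).infix hinf
    rw [Nat.sub_eq_zero_of_le hn] at hc
    rw [List.isChain_cons_cons] at hc
    exact rel_zero_det hc.1
  constructor
  · intro x hx1 hx2
    rcases hSL : S r s L₀ with _ | ⟨p, _ | ⟨q, rest⟩⟩
    · have := length_S r s L₀; rw [hSL] at this; simp at this
    · have := length_S r s L₀; rw [hSL] at this; simp at this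
    · have hhead := S_head? r s L₀
      rw [hSL] at hhead
      have hpr : p = r := by simpa using hhead
      subst hpr
      have hlast := S_getLast? r s L₀
      rw [hSL, List.getLast?_cons_cons] at hlast
      obtain ⟨u, v, hinf, hu, hv⟩ := locate x rest r q s hlast hx1 hx2
      exact descend r s L₀ hdet1all
        ((v.num * x.den - v.den * x.num + (x.num * u.den - x.den * u.num)).toNat) L₀ u v x
        le_rfl (by rw [hSL]; exact hinf) hu hv le_rfl
  · refine ⟨L₀, ?_⟩
    intro n hn j hj
    have hc := hchain n
    rw [Nat.sub_eq_zero_of_le hn] at hc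
    rw [List.Chain', List.isChain_iff_getElem] at hc
    have hrel0 := hc j (by omega)
    have h1 := rel_zero_det hrel0
    unfold xdet at h1
    simpa [List.get_eq_getElem] using h1
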